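/- Let g, t ∈ ℝ^m be nonzero vectors (the estimated and true gradients of the layer output z), let d ∈ ℝ^m have strictly positive entries with ρ₂ ≥ (max_i d_i / min_i d_i)², and let r ∈ (0, 1]. Suppose ρ₂·cos ∠(g, t) + 1 − ρ₂ > 0. Let s ∈ ℝ^m be any nonzero vector with ∠(s, d ⊙ g) ≤ arccos√r (e.g., s = S(d ⊙ g) for a sparsifying function S with sparse ratio r). Then ∠(s, d ⊙ t) ≤ arccos√r + arccos(ρ₂·cos ∠(g, t) + 1 − ρ₂). -/

import Mathlib

open InnerProductGeometry

open scoped RealInnerProductSpace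

private lemma arccos_anti {x y : ℝ} (h : x ≤ y) : Real.arccos y ≤ Real.arccos x := by
  rw [Real.arccos_eq_pi_div_two_sub_arcsin, Real.arccos_eq_pi_div_two_sub_arcsin]
  have := Real.monotone_arcsin h
  linarith

section Triangle

variable {V : Type*} [NormedAddCommGroup V] [InnerProductSpace ℝ V]

private lemma angle_triangle_unit {u v w : V} (hu : ‖u‖ = 1) (hv : ‖v‖ = 1) (hw : ‖w‖ = 1) :
    angle u w ≤ angle u v + angle v w := by
  set a : ℝ := ⟪u, v⟫ with ha
  set b : ℝ := ⟪v, w⟫ with hb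
  set c : ℝ := ⟪u, w⟫ with hc
  have habs : ∀ (p q : V), ‖p‖ = 1 → ‖q‖ = 1 → abs (⟪p, q⟫) ≤ 1 := by
    intro p q hp hq
    have := abs_real_inner_le_norm p q
    rw [hp, hq] at this; linarith
  have ha1 : |a| ≤ 1 := habs u v hu hv
  have hb1 : |b| ≤ 1 := habs v w hv hw
  have hc1 : |c| ≤ 1 := habs u w hu hw
  have hang : ∀ (p q : V), ‖p‖ = 1 → ‖q‖ = 1 → angle p q = Real.arccos ⟪p, q⟫ := by
    intro p q hp hq
    rw [angle, hp, hq]; norm_num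
  rw [hang u v hu hv, hang v w hv hw, hang u w hu hw]
  -- key Cauchy-Schwarz estimate
  have hvv : ⟪v, v⟫ = 1 := by
    rw [real_inner_self_eq_norm_sq, hv]; norm_num
  have hinner : ⟪u - a • v, w - b • v⟫ = c - a * b := by
    simp [inner_sub_left, inner_sub_right, real_inner_smul_left, real_inner_smul_right,
      hvv, real_inner_comm v w, ← hb, ← ha, ← hc, hv]
  have hnorm : ∀ (p : V) (x : ℝ), ‖p‖ = 1 → ⟪p, v⟫ = x → ‖p - x • v‖ = Real.sqrt (1 - x ^ 2) := by
    intro p x hp hpv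
    have hvp : ⟪v, p⟫ = x := by rw [real_inner_comm]; exact hpv
    rw [@norm_eq_sqrt_re_inner ℝ]
    congr 1
    simp only [inner_sub_left, inner_sub_right, real_inner_smul_left, real_inner_smul_right,
      hvv, hpv, hvp, real_inner_self_eq_norm_sq, hp]
    simp [norm_smul, hv, sq_abs]
    ring
  have hCS : a * b - Real.sqrt (1 - a ^ 2) * Real.sqrt (1 - b ^ 2) ≤ c := by
    have h1 := abs_real_inner_le_norm (u - a • v) (w - b • v)
    rw [hinner, hnorm u a hu ha.symm, hnorm w b hw (by rw [real_inner_comm])] at h1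
    have := neg_abs_le (c - a * b)
    linarith [this, h1]
  -- conclude
  by_cases hπ : Real.pi ≤ Real.arccos a + Real.arccos b
  · exact le_trans (Real.arccos_le_pi c) hπ
  · push_neg at hπ
    have h0 : 0 ≤ Real.arccos a + Real.arccos b :=
      add_nonneg (Real.arccos_nonneg a) (Real.arccos_nonneg b)
    have hcos : Real.cos (Real.arccos a + Real.arccos b) ≤ c := by
      rw [Real.cos_add, Real.cos_arccos (by linarith [abs_le.mp ha1]) (by linarith [abs_le.mp ha1]),
        Real.cos_arccos (by linarith [abs_le.mp hb1]) (by linarith [abs_le.mp hb1]),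
        Real.sin_arccos, Real.sin_arccos]
      exact hCS
    calc Real.arccos c ≤ Real.arccos (Real.cos (Real.arccos a + Real.arccos b)) :=
          arccos_anti hcos
      _ = Real.arccos a + Real.arccos b := Real.arccos_cos h0 hπ.le

private lemma angle_triangle' {u v w : V} (hu : u ≠ 0) (hv : v ≠ 0) (hw : w ≠ 0) :
    angle u w ≤ angle u v + angle v w := by
  have h1 : angle u w = angle (‖u‖⁻¹ • u) (‖w‖⁻¹ • w) := by
    rw [angle_smul_left_of_pos _ _ (inv_pos.mpr (norm_pos_iff.mpr hu)),
      angle_smul_right_of_pos _ _ (inv_pos.mpr (norm_pos_iff.mpr hw))]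
  have h2 : angle u v = angle (‖u‖⁻¹ • u) (‖v‖⁻¹ • v) := by
    rw [angle_smul_left_of_pos _ _ (inv_pos.mpr (norm_pos_iff.mpr hu)),
      angle_smul_right_of_pos _ _ (inv_pos.mpr (norm_pos_iff.mpr hv))]
  have h3 : angle v w = angle (‖v‖⁻¹ • v) (‖w‖⁻¹ • w) := by
    rw [angle_smul_left_of_pos _ _ (inv_pos.mpr (norm_pos_iff.mpr hv)),
      angle_smul_right_of_pos _ _ (inv_pos.mpr (norm_pos_iff.mpr hw))]
  rw [h1, h2, h3]
  exact angle_triangle_unit (norm_smul_inv_norm (𝕜 := ℝ) hu)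
    (norm_smul_inv_norm (𝕜 := ℝ) hv) (norm_smul_inv_norm (𝕜 := ℝ) hw)

end Triangle

set_option maxHeartbeats 1000000 in
/-- Bound on the gradient estimation angle of the layer pre-activation: if `s` makes an
angle at most `arccos √r` with `d ⊙ g` (e.g. `s = S(d ⊙ g)` for a sparsifying function of
sparse ratio `r`), `d` has positive entries with `ρ₂ ≥ (d_max/d_min)²`, and
`ρ₂ cos ∠(g,t) + 1 - ρ₂ > 0`, then
`∠(s, d ⊙ t) ≤ arccos √r + arccos(ρ₂ cos ∠(g,t) + 1 - ρ₂)`. -/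
theorem sparse_bp_h_angle {m : ℕ} (g t : EuclideanSpace ℝ (Fin m))
    (hg : g ≠ 0) (ht : t ≠ 0)
    (d : Fin m → ℝ) (hd : ∀ i, 0 < d i) (ρ₂ : ℝ)
    (hρ₂ : ((⨆ i, d i) / (⨅ i, d i)) ^ 2 ≤ ρ₂)
    (r : ℝ) (hr0 : 0 < r) (hr1 : r ≤ 1)
    (hpos : 0 < ρ₂ * Real.cos (angle g t) + 1 - ρ₂)
    (dg dt : EuclideanSpace ℝ (Fin m))
    (hdg : ∀ i, dg i = d i * g i) (hdt : ∀ i, dt i = d i * t i)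
    (s : EuclideanSpace ℝ (Fin m)) (hs : s ≠ 0)
    (hsangle : angle s dg ≤ Real.arccos (Real.sqrt r)) :
    angle s dt ≤
      Real.arccos (Real.sqrt r) + Real.arccos (ρ₂ * Real.cos (angle g t) + 1 - ρ₂) := by
  classical
  have hinner : ∀ x y : EuclideanSpace ℝ (Fin m), ⟪x, y⟫ = ∑ i, x i * y i := by
    intro x y
    simp [PiLp.inner_apply, RCLike.inner_apply, conj_trivial]
    exact Finset.sum_congr rfl (fun i _ => mul_comm _ _)
  have hm : Nonempty (Fin m) := by
    rcases isEmpty_or_nonempty (Fin m) with h | h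
    · exact absurd (by ext i; exact (h.false i).elim : g = 0) hg
    · exact h
  set a := ⨅ i, d i with ha_def
  set b := ⨆ i, d i with hb_def
  have hba : ∀ i, a ≤ d i := fun i => ciInf_le (Finite.bddBelow_range d) i
  have hbb : ∀ i, d i ≤ b := fun i => le_ciSup (Finite.bddAbove_range d) i
  have ha0 : 0 < a := by
    obtain ⟨i0, hi0⟩ := Finite.exists_min d
    exact lt_of_lt_of_le (hd i0) (le_ciInf hi0)
  have hab : a ≤ b := le_trans (hba (Classical.arbitrary _)) (hbb _)
  have hg0 : (0:ℝ) < ‖g‖ := norm_pos_iff.mpr hg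
  have ht0 : (0:ℝ) < ‖t‖ := norm_pos_iff.mpr ht
  set u : EuclideanSpace ℝ (Fin m) := ‖g‖⁻¹ • g with hu_def
  set v : EuclideanSpace ℝ (Fin m) := ‖t‖⁻¹ • t with hv_def
  have hu : ‖u‖ = 1 := norm_smul_inv_norm (𝕜 := ℝ) hg
  have hv : ‖v‖ = 1 := norm_smul_inv_norm (𝕜 := ℝ) ht
  have hdgne : dg ≠ 0 := by
    intro h
    apply hg
    ext i
    have h1 : dg i = 0 := by rw [h]; rfl
    rw [hdg i] at h1
    simpa using (mul_eq_zero.mp h1).resolve_left (ne_of_gt (hd i))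
  have hdtne : dt ≠ 0 := by
    intro h
    apply ht
    ext i
    have h1 : dt i = 0 := by rw [h]; rfl
    rw [hdt i] at h1
    simpa using (mul_eq_zero.mp h1).resolve_left (ne_of_gt (hd i))
  set Du : EuclideanSpace ℝ (Fin m) := ‖g‖⁻¹ • dg with hDu_def
  set Dv : EuclideanSpace ℝ (Fin m) := ‖t‖⁻¹ • dt with hDv_def
  have hDu : ∀ i, Du i = d i * u i := by
    intro i
    simp only [hDu_def, hu_def, PiLp.smul_apply, smul_eq_mul, hdg i]
    ring
  have hDv : ∀ i, Dv i = d i * v i := by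
    intro i
    simp only [hDv_def, hv_def, PiLp.smul_apply, smul_eq_mul, hdt i]
    ring
  have hang1 : angle Du Dv = angle dg dt := by
    rw [hDu_def, hDv_def, angle_smul_left_of_pos _ _ (inv_pos.mpr hg0),
      angle_smul_right_of_pos _ _ (inv_pos.mpr ht0)]
  have hang2 : angle u v = angle g t := by
    rw [hu_def, hv_def, angle_smul_left_of_pos _ _ (inv_pos.mpr hg0),
      angle_smul_right_of_pos _ _ (inv_pos.mpr ht0)]
  set c0 : ℝ := Real.cos (angle g t) with hc0_def
  have hcosuv : (⟪u, v⟫ : ℝ) = c0 := by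
    rw [hc0_def, ← hang2, cos_angle, hu, hv]
    norm_num
  -- lower bounds on norms of Du, Dv
  have hnormsq : ∀ (w Dw : EuclideanSpace ℝ (Fin m)), ‖w‖ = 1 →
      (∀ i, Dw i = d i * w i) → a ≤ ‖Dw‖ := by
    intro w Dw hw hDw
    have hwsum : ∑ i, w i * w i = 1 := by
      rw [← hinner w w, real_inner_self_eq_norm_sq, hw]; norm_num
    have hsq : a ^ 2 ≤ ‖Dw‖ ^ 2 := by
      rw [← real_inner_self_eq_norm_sq, hinner]
      calc a ^ 2 = ∑ i, a ^ 2 * (w i * w i) := by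
            rw [← Finset.mul_sum, hwsum, mul_one]
        _ ≤ ∑ i, Dw i * Dw i := by
            apply Finset.sum_le_sum
            intro i _
            rw [hDw i]
            have h2 : a * a ≤ d i * d i := mul_le_mul (hba i) (hba i) ha0.le (hd i).le
            nlinarith [mul_le_mul_of_nonneg_right h2 (mul_self_nonneg (w i))]
    nlinarith [norm_nonneg Dw]
  have haP : a ≤ ‖Du‖ := hnormsq u Du hu hDu
  have haQ : a ≤ ‖Dv‖ := hnormsq v Dv hv hDv
  -- difference bound
  have hdiff : ‖Du - Dv‖ ^ 2 ≤ b ^ 2 * ‖u - v‖ ^ 2 := by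
    rw [← real_inner_self_eq_norm_sq, ← real_inner_self_eq_norm_sq, hinner, hinner,
      Finset.mul_sum]
    apply Finset.sum_le_sum
    intro i _
    have hi : (Du - Dv) i = d i * (u - v) i := by
      simp only [PiLp.sub_apply, hDu i, hDv i]
      ring
    rw [hi]
    have h2 : d i * d i ≤ b * b := mul_le_mul (hbb i) (hbb i) (hd i).le
      (le_trans (hd i).le (hbb i))
    nlinarith [mul_le_mul_of_nonneg_right h2 (mul_self_nonneg ((u - v) i))]
  have huv : ‖u - v‖ ^ 2 = 2 - 2 * c0 := by
    rw [@norm_sub_sq_real, hu, hv, hcosuv]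
    ring
  have hDuDv : ‖Du - Dv‖ ^ 2 = ‖Du‖ ^ 2 - 2 * ⟪Du, Dv⟫ + ‖Dv‖ ^ 2 :=
    @norm_sub_sq_real _ _ _ Du Dv
  set P : ℝ := ‖Du‖
  set Q : ℝ := ‖Dv‖
  set I : ℝ := (⟪Du, Dv⟫ : ℝ)
  have hPQI : P ^ 2 - 2 * I + Q ^ 2 ≤ b ^ 2 * (2 - 2 * c0) := by
    rw [← hDuDv, ← huv]; exact hdiff
  have hb2 : b ^ 2 ≤ ρ₂ * a ^ 2 := by
    have h1 : (b / a) ^ 2 ≤ ρ₂ := hρ₂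
    rw [div_pow] at h1
    calc b ^ 2 = b ^ 2 / a ^ 2 * a ^ 2 := by field_simp
      _ ≤ ρ₂ * a ^ 2 := mul_le_mul_of_nonneg_right h1 (by positivity)
  have hρ₂pos : 0 < ρ₂ := by
    have h0 : (1:ℝ) ≤ b / a := by rw [le_div_iff₀ ha0]; linarith
    have h1 : (1:ℝ) ≤ (b / a) ^ 2 := by nlinarith
    linarith [hρ₂]
  have hc1 : c0 ≤ 1 := Real.cos_le_one _
  have hPQ2 : a ^ 2 ≤ P * Q := by
    have := mul_le_mul haP haQ ha0.le (norm_nonneg Du)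
    nlinarith
  have hPQpos : 0 < P * Q := lt_of_lt_of_le (by positivity) hPQ2
  -- the key multiplied inequality
  have hkey : (ρ₂ * c0 + 1 - ρ₂) * (P * Q) ≤ I := by
    nlinarith [sq_nonneg (P - Q),
      mul_nonneg (mul_nonneg hρ₂pos.le (by linarith : (0:ℝ) ≤ 1 - c0))
        (sub_nonneg.mpr hPQ2)]
  have hcosbound : ρ₂ * c0 + 1 - ρ₂ ≤ Real.cos (angle dg dt) := by
    rw [← hang1, cos_angle]
    exact (le_div_iff₀ hPQpos).mpr hkey
  have hangdd : angle dg dt ≤ Real.arccos (ρ₂ * c0 + 1 - ρ₂) := by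
    have h1 : angle dg dt = Real.arccos (Real.cos (angle dg dt)) :=
      (Real.arccos_cos (angle_nonneg _ _) (angle_le_pi _ _)).symm
    rw [h1]
    exact arccos_anti hcosbound
  calc angle s dt ≤ angle s dg + angle dg dt := angle_triangle' hs hdgne hdtne
    _ ≤ Real.arccos (Real.sqrt r) + Real.arccos (ρ₂ * c0 + 1 - ρ₂) :=
        add_le_add hsangle hangdd
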